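/- Conversely, if ŷ · v(x) ⬝ (μ₊ - μ₋) > 0, then the entropy-minimization gradient step using x strictly increases the difference of mean logits between the two classes. -/

import Mathlib

open RealInnerProductSpace

noncomputable def sigmoid (a : ℝ) : ℝ := 1 / (1 + Real.exp (-a))

noncomputable def sigEnt (a : ℝ) : ℝ :=
  -sigmoid a * Real.log (sigmoid a) - (1 - sigmoid a) * Real.log (1 - sigmoid a)

lemma sig_pos (a : ℝ) : 0 < sigmoid a := by
  unfold sigmoid; positivity

lemma sig_lt_one (a : ℝ) : sigmoid a < 1 := by
  unfold sigmoid
  rw [div_lt_one (by positivity)]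
  linarith [Real.exp_pos (-a)]

lemma hasDerivAt_sigmoid (a : ℝ) :
    HasDerivAt sigmoid (sigmoid a * (1 - sigmoid a)) a := by
  have hne : (1 : ℝ) + Real.exp (-a) ≠ 0 := by positivity
  have h0 : HasDerivAt (fun x : ℝ => 1 + Real.exp (-x)) (Real.exp (-a) * -1) a :=
    ((Real.hasDerivAt_exp (-a)).comp a ((hasDerivAt_id a).neg)).const_add 1
  have h1 := h0.inv hne
  have : HasDerivAt sigmoid (-(Real.exp (-a) * -1) / (1 + Real.exp (-a))^2) a := by
    unfold sigmoid
    simp only [one_div]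
    exact h1
  convert this using 1
  unfold sigmoid
  field_simp
  ring

lemma hasDerivAt_sigEnt (a : ℝ) :
    HasDerivAt sigEnt (-a * (sigmoid a * (1 - sigmoid a))) a := by
  set s := sigmoid a with hs
  have hs0 : 0 < s := sig_pos a
  have hs1 : s < 1 := sig_lt_one a
  have hσ := hasDerivAt_sigmoid a
  have hlog : HasDerivAt (fun x => Real.log (sigmoid x)) (s⁻¹ * (s * (1 - s))) a :=
    by have := (Real.hasDerivAt_log hs0.ne').comp a hσ; exact this
  have hlog1 : HasDerivAt (fun x => Real.log (1 - sigmoid x)) ((1 - s)⁻¹ * -(s * (1 - s))) a :=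
    by
      have := (Real.hasDerivAt_log (show (1:ℝ) - s ≠ 0 by linarith)).comp a
        ((hasDerivAt_const a 1).sub hσ)
      exact this.congr_deriv (by rw [← hs]; ring)
  have h1 : HasDerivAt (fun x => -sigmoid x * Real.log (sigmoid x))
      (-(s * (1 - s)) * Real.log s + -s * (s⁻¹ * (s * (1 - s)))) a := (hσ.neg.mul hlog)
  have h2 : HasDerivAt (fun x => (1 - sigmoid x) * Real.log (1 - sigmoid x))
      (-(s * (1 - s)) * Real.log (1 - s) + (1 - s) * ((1 - s)⁻¹ * -(s * (1 - s)))) a :=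
    by
      have := ((hasDerivAt_const a 1).sub hσ).mul hlog1
      exact this.congr_deriv (by simp only [Pi.sub_apply, ← hs]; ring)
  have h := h1.sub h2
  have heq : -(s * (1 - s)) * Real.log s + -s * (s⁻¹ * (s * (1 - s))) -
      (-(s * (1 - s)) * Real.log (1 - s) + (1 - s) * ((1 - s)⁻¹ * -(s * (1 - s)))) =
      (Real.log (1 - s) - Real.log s) * (s * (1 - s)) := by
    have hne : (1:ℝ) - s ≠ 0 := by linarith
    field_simp
    ring
  rw [heq] at h
  have hratio : Real.log (1 - s) - Real.log s = -a := by
    have h1s : 1 - s = Real.exp (-a) / (1 + Real.exp (-a)) := by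
      rw [hs]; unfold sigmoid; field_simp; ring
    rw [h1s, hs]
    unfold sigmoid
    rw [Real.log_div (Real.exp_pos _).ne' (by positivity),
        Real.log_div one_ne_zero (by positivity), Real.log_exp, Real.log_one]
    ring
  rw [hratio] at h
  exact h

theorem beneficial_sample {d : ℕ} (θ v μp μm : EuclideanSpace ℝ (Fin d))
    (η : ℝ) (hη : 0 < η)
    (ha : ⟪θ, v⟫ ≠ 0)
    (yhat : ℝ) (hy : yhat = if 0 < ⟪θ, v⟫ then 1 else -1)
    (hben : 0 < yhat * ⟪v, μp - μm⟫)
    (Δθ : EuclideanSpace ℝ (Fin d))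
    (hΔ : Δθ = -η • gradient (fun θ' : EuclideanSpace ℝ (Fin d) => sigEnt ⟪θ', v⟫) θ) :
    ⟪θ, μp⟫ - ⟪θ, μm⟫ < ⟪θ + Δθ, μp⟫ - ⟪θ + Δθ, μm⟫ := by
  set a : ℝ := ⟪θ, v⟫ with haa
  set c : ℝ := -a * (sigmoid a * (1 - sigmoid a)) with hc
  -- fderiv of inner
  have hinner : HasFDerivAt (fun θ' : EuclideanSpace ℝ (Fin d) => ⟪θ', v⟫)
      (innerSL ℝ v) θ := by
    have heq : (fun θ' : EuclideanSpace ℝ (Fin d) => ⟪θ', v⟫) =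
        fun θ' => (innerSL ℝ v) θ' := by
      funext w; simp [real_inner_comm]
    rw [heq]
    exact (innerSL ℝ v).hasFDerivAt
  have hcomp : HasFDerivAt (fun θ' : EuclideanSpace ℝ (Fin d) => sigEnt ⟪θ', v⟫)
      (c • innerSL ℝ v) θ := by
    have := (hasDerivAt_sigEnt a).comp_hasFDerivAt θ hinner; exact this
  have hgrad : HasGradientAt (fun θ' : EuclideanSpace ℝ (Fin d) => sigEnt ⟪θ', v⟫)
      (c • v) θ := by
    rw [hasGradientAt_iff_hasFDerivAt]
    refine hcomp.congr_fderiv ?_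
    ext w
    simp [InnerProductSpace.toDual_apply_apply, inner_smul_left]
  have hgradeq := hgrad.gradient
  rw [hgradeq] at hΔ
  have hΔ' : Δθ = (η * c * -1) • v := by
    rw [hΔ, smul_smul]; ring_nf
  have hs0 := sig_pos a
  have hs1 := sig_lt_one a
  have hss : 0 < sigmoid a * (1 - sigmoid a) := mul_pos hs0 (by linarith)
  have key : 0 < (η * c * -1) * ⟪v, μp - μm⟫ := by
    rcases lt_or_gt_of_ne ha with hneg | hpos
    · have hy' : yhat = -1 := by rw [hy, if_neg (not_lt.mpr hneg.le)]
      have hv : ⟪v, μp - μm⟫ < 0 := by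
        rw [hy'] at hben; nlinarith
      have : η * c * -1 < 0 := by
        have : 0 < c := by rw [hc]; exact mul_pos (by linarith) hss
        nlinarith
      exact mul_pos_of_neg_of_neg this hv
    · have hy' : yhat = 1 := by rw [hy, if_pos hpos]
      have hv : 0 < ⟪v, μp - μm⟫ := by rw [hy'] at hben; linarith
      have : 0 < η * c * -1 := by
        have : c < 0 := by
          rw [hc]
          have := mul_pos hpos hss
          nlinarith
        nlinarith
      exact mul_pos this hv
  have expand : ⟪θ + Δθ, μp⟫ - ⟪θ + Δθ, μm⟫ =
      ⟪θ, μp⟫ - ⟪θ, μm⟫ + (η * c * -1) * ⟪v, μp - μm⟫ := by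
    rw [hΔ']
    simp [inner_add_left, inner_smul_left, inner_sub_right]
    ring
  rw [expand]
  linarith
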